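/- Let p ≥ 5 be a prime and let N be a normal subgroup of SL₂(F_p) containing an element of order p. Then N = SL₂(F_p). -/

import Mathlib

open Matrix Pointwise

namespace Stmt10Aux

variable {p : ℕ} [Fact p.Prime]

/-- upper unipotent -/
def T (b : ZMod p) : Matrix.SpecialLinearGroup (Fin 2) (ZMod p) :=
  ⟨!![1, b; 0, 1], by simp [Matrix.det_fin_two_of]⟩

/-- lower unipotent -/
def L (c : ZMod p) : Matrix.SpecialLinearGroup (Fin 2) (ZMod p) :=
  ⟨!![1, 0; c, 1], by simp [Matrix.det_fin_two_of]⟩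

lemma T_mul (a b : ZMod p) : T a * T b = T (a + b) := by
  apply Subtype.ext
  show (!![1, a; 0, 1] : Matrix (Fin 2) (Fin 2) (ZMod p)) * !![1, b; 0, 1] = !![1, a + b; 0, 1]
  rw [Matrix.mul_fin_two]
  norm_num [add_comm]

lemma L_mul (a b : ZMod p) : L a * L b = L (a + b) := by
  apply Subtype.ext
  show (!![1, 0; a, 1] : Matrix (Fin 2) (Fin 2) (ZMod p)) * !![1, 0; b, 1] = !![1, 0; a + b, 1]
  rw [Matrix.mul_fin_two]
  norm_num [add_comm]

lemma L_zero : L (0 : ZMod p) = 1 := by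
  apply Subtype.ext
  show (!![1, 0; 0, 1] : Matrix (Fin 2) (Fin 2) (ZMod p)) = 1
  rw [Matrix.one_fin_two]

lemma T_zero : T (0 : ZMod p) = 1 := by
  apply Subtype.ext
  show (!![1, 0; 0, 1] : Matrix (Fin 2) (Fin 2) (ZMod p)) = 1
  rw [Matrix.one_fin_two]

/-- `T` as a hom from the additive group -/
def Thom : Multiplicative (ZMod p) →* Matrix.SpecialLinearGroup (Fin 2) (ZMod p) where
  toFun b := T (Multiplicative.toAdd b)
  map_one' := T_zero
  map_mul' a b := by rw [T_mul]; rfl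

lemma Thom_injective : Function.Injective (Thom (p := p)) := by
  intro a b h
  have : (Thom a : Matrix (Fin 2) (Fin 2) (ZMod p)) 0 1
      = (Thom b : Matrix (Fin 2) (Fin 2) (ZMod p)) 0 1 := by rw [h]
  exact this

def w : Matrix.SpecialLinearGroup (Fin 2) (ZMod p) :=
  ⟨!![0, -1; 1, 0], by simp [Matrix.det_fin_two_of]⟩

lemma L_eq_conj (c : ZMod p) : L c = w * T (-c) * w⁻¹ := by
  rw [eq_mul_inv_iff_mul_eq]
  apply Subtype.ext
  show (!![1, 0; c, 1] : Matrix (Fin 2) (Fin 2) (ZMod p)) * !![0, -1; 1, 0]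
      = !![0, -1; 1, 0] * !![1, -c; 0, 1]
  rw [Matrix.mul_fin_two, Matrix.mul_fin_two]
  norm_num

lemma card_dvd :
    Nat.card (SpecialLinearGroup (Fin 2) (ZMod p)) ∣ (p ^ 2 - 1) * (p ^ 2 - p) := by
  have hinj : Function.Injective (SpecialLinearGroup.toGL :
      SpecialLinearGroup (Fin 2) (ZMod p) →* GL (Fin 2) (ZMod p)) := by
    intro g g' h
    exact Subtype.ext (congrArg Units.val h)
  have h1 : Nat.card (SpecialLinearGroup (Fin 2) (ZMod p))
      = Nat.card (SpecialLinearGroup.toGL (n := Fin 2) (R := ZMod p)).range :=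
    Nat.card_congr (MonoidHom.ofInjective hinj).toEquiv
  have h2 := Subgroup.card_subgroup_dvd_card
    ((SpecialLinearGroup.toGL (n := Fin 2) (R := ZMod p)).range)
  rw [Matrix.card_GL_field] at h2
  rw [h1]
  refine h2.trans (dvd_of_eq ?_)
  simp [Fin.prod_univ_two, ZMod.card]

end Stmt10Aux

open Stmt10Aux

/-- For a prime `p ≥ 5`, a normal subgroup of `SL₂(F_p)` containing an element
of order `p` is the whole of `SL₂(F_p)`. -/
theorem stmt10 (p : ℕ) (hp : p.Prime) (hp5 : 5 ≤ p)
    (N : Subgroup (Matrix.SpecialLinearGroup (Fin 2) (ZMod p))) (hN : N.Normal)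
    (hx : ∃ x ∈ N, orderOf x = p) :
    N = ⊤ := by
  haveI : Fact p.Prime := ⟨hp⟩
  obtain ⟨x, hxN, hxord⟩ := hx
  have hp2 : 2 ≤ p := hp.two_le
  -- p-adic valuation of the group order is 1
  have hndvd : ¬ p ^ 2 ∣ Nat.card (Matrix.SpecialLinearGroup (Fin 2) (ZMod p)) := by
    intro hdvd
    have hcop : Nat.Coprime p (p ^ 2 - 1) := by
      rw [hp.coprime_iff_not_dvd]
      intro hd
      have h1 : p ∣ p ^ 2 := dvd_pow_self p (by norm_num)
      have : p ∣ p ^ 2 - (p ^ 2 - 1) := Nat.dvd_sub h1 hd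
      have hle : 1 ≤ p ^ 2 := Nat.one_le_iff_ne_zero.mpr (by positivity)
      rw [Nat.sub_sub_self hle] at this
      exact hp.one_lt.ne' (Nat.dvd_one.mp this)
    have hcop2 : Nat.Coprime (p ^ 2) (p ^ 2 - 1) := hcop.pow_left 2
    have hdvd2 : p ^ 2 ∣ (p ^ 2 - 1) * (p ^ 2 - p) := hdvd.trans card_dvd
    have : p ^ 2 ∣ (p ^ 2 - p) := hcop2.dvd_of_dvd_mul_left hdvd2
    have hpos : 0 < p ^ 2 - p := by
      have : p < p ^ 2 := by nlinarith
      omega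
    have := Nat.le_of_dvd hpos this
    have : p ^ 2 - p < p ^ 2 := by
      have : 0 < p := by omega
      omega
    omega
  have hcardpos : Nat.card (Matrix.SpecialLinearGroup (Fin 2) (ZMod p)) ≠ 0 :=
    Nat.card_pos.ne'
  have hpdvd : p ∣ Nat.card (Matrix.SpecialLinearGroup (Fin 2) (ZMod p)) := by
    have := orderOf_dvd_natCard x
    rwa [hxord] at this
  have hfact : (Nat.card (Matrix.SpecialLinearGroup (Fin 2) (ZMod p))).factorization p = 1 := by
    have h1 : 1 ≤ (Nat.card (Matrix.SpecialLinearGroup (Fin 2) (ZMod p))).factorization p := by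
      rw [← hp.pow_dvd_iff_le_factorization hcardpos, pow_one]
      exact hpdvd
    have h2 : ¬ 2 ≤ (Nat.card (Matrix.SpecialLinearGroup (Fin 2) (ZMod p))).factorization p := by
      rw [← hp.pow_dvd_iff_le_factorization hcardpos]
      exact hndvd
    omega
  -- Sylow theory: N contains all upper unipotents
  have hzpN : Subgroup.zpowers x ≤ N := Subgroup.zpowers_le.mpr hxN
  have hPx : IsPGroup p (Subgroup.zpowers x) := by
    apply IsPGroup.of_card (n := 1)
    rw [Nat.card_zpowers, hxord, pow_one]
  have hPU : IsPGroup p (Thom (p := p)).range := by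
    apply IsPGroup.of_card (n := 1)
    rw [← Nat.card_congr (MonoidHom.ofInjective Thom_injective).toEquiv, pow_one]
    simp [Nat.card_eq_fintype_card, ZMod.card]
  obtain ⟨Q, hQx⟩ := hPx.exists_le_sylow
  obtain ⟨R, hRU⟩ := hPU.exists_le_sylow
  have hQcard : Nat.card Q = p := by rw [Q.card_eq_multiplicity, hfact, pow_one]
  have hRcard : Nat.card R = p := by rw [R.card_eq_multiplicity, hfact, pow_one]
  have hQeq : Subgroup.zpowers x = (Q : Subgroup _) := by
    apply Subgroup.eq_of_le_of_card_ge hQx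
    rw [hQcard, Nat.card_zpowers, hxord]
  have hReq : (Thom (p := p)).range = (R : Subgroup _) := by
    apply Subgroup.eq_of_le_of_card_ge hRU
    rw [hRcard, ← Nat.card_congr (MonoidHom.ofInjective Thom_injective).toEquiv]
    simp [Nat.card_eq_fintype_card, ZMod.card]
  obtain ⟨g, hg⟩ := MulAction.exists_smul_eq (Matrix.SpecialLinearGroup (Fin 2) (ZMod p)) Q R
  have hRconj : (R : Subgroup (Matrix.SpecialLinearGroup (Fin 2) (ZMod p)))
      = MulAut.conj g • (Q : Subgroup (Matrix.SpecialLinearGroup (Fin 2) (ZMod p))) := by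
    rw [← hg, Sylow.coe_subgroup_smul]
  have hT : ∀ b : ZMod p, T b ∈ N := by
    intro b
    have hmem : T b ∈ (R : Subgroup (Matrix.SpecialLinearGroup (Fin 2) (ZMod p))) := hReq ▸ ⟨Multiplicative.ofAdd b, rfl⟩
    rw [hRconj, ← hQeq] at hmem
    obtain ⟨y, hy, hyeq⟩ := (Subgroup.mem_smul_pointwise_iff_exists _ _ _).mp hmem
    rw [← hyeq]
    exact hN.conj_mem y (hzpN hy) g
  have hL : ∀ c : ZMod p, L c ∈ N := fun c => by
    rw [L_eq_conj]
    exact hN.conj_mem _ (hT (-c)) w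
  -- elements with nonzero lower-left entry
  have key : ∀ a b c d (h : a * d - b * c = 1), c ≠ 0 →
      (⟨!![a, b; c, d], by rwa [Matrix.det_fin_two_of]⟩ :
        Matrix.SpecialLinearGroup (Fin 2) (ZMod p)) ∈ N := by
    intro a b c d h hc
    have heq : (⟨!![a, b; c, d], by rwa [Matrix.det_fin_two_of]⟩ :
        Matrix.SpecialLinearGroup (Fin 2) (ZMod p))
        = T ((a - 1) / c) * L c * T ((d - 1) / c) := by
      apply Subtype.ext
      show (!![a, b; c, d] : Matrix (Fin 2) (Fin 2) (ZMod p))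
          = !![1, (a - 1) / c; 0, 1] * !![1, 0; c, 1] * !![1, (d - 1) / c; 0, 1]
      rw [Matrix.mul_fin_two, Matrix.mul_fin_two]
      ext i j
      fin_cases i <;> fin_cases j <;> simp <;> field_simp
      all_goals grind
    rw [heq]
    exact N.mul_mem (N.mul_mem (hT _) (hL _)) (hT _)
  rw [Subgroup.eq_top_iff']
  intro g0
  induction g0 using Matrix.SpecialLinearGroup.fin_two_induction with
  | _ a b c d hdet =>
    by_cases hc : c ≠ 0
    · exact key a b c d hdet hc
    · push_neg at hc
      subst hc
      have hd : d ≠ 0 := by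
        intro h0
        rw [h0] at hdet
        simp at hdet
      have hdet2 : (a + b) * d - b * d = 1 := by linear_combination hdet
      have h2 := key (a + b) b d d hdet2 hd
      have h3 := N.mul_mem h2 (hL (-1 : ZMod p))
      refine (congrArg (· ∈ N) ?_).mpr h3
      apply Subtype.ext
      show (!![a, b; 0, d] : Matrix (Fin 2) (Fin 2) (ZMod p)) = !![a + b, b; d, d] * !![1, 0; -1, 1]
      rw [Matrix.mul_fin_two]
      norm_num
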